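/- Suppose x_N = M and N ≥ 2, M ≥ 2. Then the function G_{M,N} satisfies the recursion G_{M,N}(u₁,…,u_N|v₁,…,v_M|x₁,…,x_N|a₁₂)|_{v_M = u_N} = ∏_{j=1}^{N−1} ([1 + u_N − u_j]/[1]) · ∏_{k=1}^{M−1} ([1 + u_N − v_k]/[1]) · G_{M−1,N−1}(u₁,…,u_{N−1}|v₁,…,v_{M−1}|x₁,…,x_{N−1}|a₁₂ + 1). -/

import Mathlib

open Complex

noncomputable section

/-- The half period magnitude `K₁` for elliptic nome `q`. -/
def Kone (q : ℝ) : ℝ :=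
  Real.pi / 2 * ∏' n : ℕ,
    ((1 + q ^ (2 * n + 1)) / (1 - q ^ (2 * n + 1)) *
      ((1 - q ^ (2 * n + 2)) / (1 + q ^ (2 * n + 2)))) ^ 2

/-- The half period magnitude `K₂` for elliptic nome `q`. -/
def Ktwo (q : ℝ) : ℝ := -(Kone q / Real.pi) * Real.log q

/-- The elliptic theta function `H`. -/
def theta (q : ℝ) (u : ℂ) : ℂ :=
  2 * (q : ℂ) ^ (1 / 4 : ℂ) * Complex.sin (Real.pi * u / (2 * (Kone q : ℂ))) *
    ∏' n : ℕ,
      ((1 - 2 * (q : ℂ) ^ (2 * n + 2) * Complex.cos (Real.pi * u / (Kone q : ℂ)) +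
          (q : ℂ) ^ (4 * n + 4)) * (1 - (q : ℂ) ^ (2 * n + 2)))

/-- The bracket `[u] = H(λu)`. -/
def brak (q : ℝ) (lam : ℂ) (u : ℂ) : ℂ := theta q (lam * u)

/-- `x^M_k`: equals `x_k` for `k = 1,…,N` and `M+1` for `k = N+1`. -/
def xM (M N : ℕ) (x : ℕ → ℕ) (k : ℕ) : ℕ := if k = N + 1 then M + 1 else x k

/-- The elliptic Schur-type symmetric function `E_{M,N}`. -/
def ellE (q : ℝ) (lam : ℂ) (M N : ℕ) (u v : ℕ → ℂ) (x : ℕ → ℕ) (a12 : ℂ) : ℂ :=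
  (∏ k ∈ Finset.Icc 1 N, ∏ j ∈ Finset.Icc (xM M N x k) (xM M N x (k + 1) - 2),
      brak q lam (a12 + (j : ℂ) + (N : ℂ)) / brak q lam (a12 + (j : ℂ) + (N : ℂ) - (k : ℂ))) *
  ∑ σ : Equiv.Perm (Fin N),
    (∏ j : Fin N, ∏ k : Fin N,
        if (j : ℕ) < (k : ℕ) then
          brak q lam 1 / brak q lam (u ((σ j : ℕ) + 1) - u ((σ k : ℕ) + 1))
        else 1) *
    (∏ j : Fin N, ∏ k ∈ Finset.Icc (x ((j : ℕ) + 1) + 1) M,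
        brak q lam (u ((σ j : ℕ) + 1) - v k) / brak q lam 1) *
    (∏ j : Fin N,
        brak q lam (-u ((σ j : ℕ) + 1) + v (x ((j : ℕ) + 1)) + a12 +
            (x ((j : ℕ) + 1) : ℂ) + (N : ℂ) - 2) /
          brak q lam (a12 + (x ((j : ℕ) + 1) : ℂ) + (N : ℂ) - 2)) *
    (∏ j : Fin N, ∏ k ∈ Finset.Icc 1 (x ((j : ℕ) + 1) - 1),
        brak q lam (1 + u ((σ j : ℕ) + 1) - v k) / brak q lam 1)

/-- `G_{M,N}`: the product of the elliptic factors and `E_{M,N}`. -/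
def ellG (q : ℝ) (lam : ℂ) (M N : ℕ) (u v : ℕ → ℂ) (x : ℕ → ℕ) (a12 : ℂ) : ℂ :=
  (∏ j : Fin N, ∏ k : Fin N,
      if (j : ℕ) < (k : ℕ) then
        brak q lam (1 + u ((k : ℕ) + 1) - u ((j : ℕ) + 1)) / brak q lam 1
      else 1) *
  ellE q lam M N u v x a12



lemma brak_zero (q : ℝ) (lam : ℂ) : brak q lam 0 = 0 := by
  simp [brak, theta]

lemma key_alg (a e1 b e2 c d r : ℂ) (h : e1 * e2 = 1) :
    a * e1 * (b * e2) * c * (d * r) = r * (a * b * c * d) := by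
  calc a * e1 * (b * e2) * c * (d * r) = (e1 * e2) * (r * (a * b * c * d)) := by ring
  _ = r * (a * b * c * d) := by rw [h, one_mul]

/-- extension of a permutation of `Fin n` to `Fin (n+1)` fixing the last element -/
def extLast {n : ℕ} (σ : Equiv.Perm (Fin n)) : Equiv.Perm (Fin (n + 1)) :=
  (finSuccEquivLast.trans (σ.optionCongr)).trans finSuccEquivLast.symm

@[simp] lemma extLast_castSucc {n : ℕ} (σ : Equiv.Perm (Fin n)) (i : Fin n) :
    extLast σ (Fin.castSucc i) = Fin.castSucc (σ i) := by
  simp [extLast]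

@[simp] lemma extLast_last {n : ℕ} (σ : Equiv.Perm (Fin n)) :
    extLast σ (Fin.last n) = Fin.last n := by
  simp [extLast]

def permEquivLast (n : ℕ) : (Option (Fin n) × Equiv.Perm (Fin n)) ≃ Equiv.Perm (Fin (n + 1)) :=
  Equiv.Perm.decomposeOption.symm.trans finSuccEquivLast.permCongr.symm

lemma sum_perm_last {n : ℕ} (f : Equiv.Perm (Fin (n + 1)) → ℂ)
    (h0 : ∀ τ, τ (Fin.last n) ≠ Fin.last n → f τ = 0) :
    ∑ τ : Equiv.Perm (Fin (n + 1)), f τ = ∑ σ : Equiv.Perm (Fin n), f (extLast σ) := by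
  set E := permEquivLast n with hE
  rw [← Equiv.sum_comp E f, Fintype.sum_prod_type, Fintype.sum_option]
  have hnone : ∀ σ : Equiv.Perm (Fin n), E (none, σ) = extLast σ := by
    intro σ
    ext i
    simp [hE, permEquivLast, extLast, Equiv.permCongr, Equiv.equivCongr,
      Equiv.Perm.decomposeOption]
  have hsome : ∀ (i : Fin n) (σ : Equiv.Perm (Fin n)), f (E (some i, σ)) = 0 := by
    intro i σ
    apply h0
    have : E (some i, σ) (Fin.last n) = Fin.castSucc i := by
      simp [hE, permEquivLast, Equiv.permCongr, Equiv.equivCongr, Equiv.Perm.decomposeOption]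
    rw [this]
    exact (Fin.castSucc_lt_last i).ne
  simp only [hsome, Finset.sum_const_zero, add_zero, hnone]

lemma prod_ite_lt_succ {γ : Type*} [CommMonoid γ] (n : ℕ) (f : Fin (n+1) → Fin (n+1) → γ) :
    (∏ j : Fin (n+1), ∏ k : Fin (n+1), if (j : ℕ) < (k : ℕ) then f j k else 1)
    = (∏ j : Fin n, ∏ k : Fin n,
        if (j : ℕ) < (k : ℕ) then f j.castSucc k.castSucc else 1)
      * ∏ j : Fin n, f j.castSucc (Fin.last n) := by
  rw [Fin.prod_univ_castSucc
    (f := fun j => ∏ k : Fin (n+1), if (j : ℕ) < (k : ℕ) then f j k else 1)]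
  have h1 : (∏ k : Fin (n+1),
      if ((Fin.last n : Fin (n+1)) : ℕ) < (k : ℕ) then f (Fin.last n) k else 1) = 1 := by
    apply Finset.prod_eq_one
    intro k _
    rw [if_neg]
    have := k.is_le
    simp only [Fin.val_last]
    omega
  rw [h1, mul_one, ← Finset.prod_mul_distrib]
  apply Finset.prod_congr rfl
  intro j _
  rw [Fin.prod_univ_castSucc
    (f := fun k => if ((j.castSucc : Fin (n+1)) : ℕ) < (k : ℕ) then f j.castSucc k else 1)]
  rw [if_pos (by simpa using j.isLt)]
  simp [Fin.coe_castSucc]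

lemma prod_fin_eq_prod_Icc {γ : Type*} [CommMonoid γ] (n : ℕ) (f : ℕ → γ) :
    (∏ j : Fin n, f ((j : ℕ) + 1)) = ∏ j ∈ Finset.Icc 1 n, f j := by
  rw [Fin.prod_univ_eq_prod_range (fun j => f (j + 1))]
  rw [← Finset.Ico_add_one_right_eq_Icc, Finset.prod_Ico_eq_prod_range]
  simp [add_comm]


set_option maxHeartbeats 3000000 in
/-- if `x_N = M` and `N ≥ 2`, `M ≥ 2`, then `G_{M,N}` satisfies the
recursion
`G_{M,N}(…)|_{v_M = u_N} = ∏_{j=1}^{N-1}([1+u_N-u_j]/[1]) ∏_{k=1}^{M-1}([1+u_N-v_k]/[1])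
  · G_{M-1,N-1}(u₁,…,u_{N-1}|v₁,…,v_{M-1}|x₁,…,x_{N-1}|a₁₂+1)`. -/
theorem statement16 (q : ℝ) (hq0 : 0 < q) (hq1 : q < 1) (lam : ℂ) (hlam : lam ≠ 0)
    (M N : ℕ) (hN : 2 ≤ N) (hM : 2 ≤ M) (hNM : N ≤ M)
    (u v : ℕ → ℂ) (x : ℕ → ℕ)
    (hx1 : 1 ≤ x 1) (hxmono : ∀ j k, 1 ≤ j → j < k → k ≤ N → x j < x k)
    (hxN : x N = M) (a12 : ℂ)
    (hbr1 : brak q lam 1 ≠ 0)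
    (hbrA : ∀ n : ℤ, brak q lam (a12 + (n : ℂ)) ≠ 0)
    (hbrA' : ∀ n : ℤ, brak q lam (-a12 + (n : ℂ)) ≠ 0)
    (hu : ∀ j k, 1 ≤ j → j ≤ N → 1 ≤ k → k ≤ N → j ≠ k → brak q lam (u j - u k) ≠ 0) :
    ellG q lam M N u (Function.update v M (u N)) x a12 =
      (∏ j ∈ Finset.Icc 1 (N - 1), brak q lam (1 + u N - u j) / brak q lam 1) *
      (∏ k ∈ Finset.Icc 1 (M - 1), brak q lam (1 + u N - v k) / brak q lam 1) *
      ellG q lam (M - 1) (N - 1) u v x (a12 + 1) := by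
  obtain ⟨n, rfl⟩ : ∃ n, N = n + 1 := ⟨N - 1, by omega⟩
  obtain ⟨m, rfl⟩ : ∃ m, M = m + 1 := ⟨M - 1, by omega⟩
  have hn1 : 1 ≤ n := by omega
  have hm1 : 1 ≤ m := by omega
  have hxle : ∀ j, 1 ≤ j → j ≤ n → x j ≤ m := by
    intro j h1 h2
    have := hxmono j (n + 1) h1 (by omega) (le_refl _)
    omega
  simp only [Nat.add_sub_cancel]
  simp only [ellG, ellE]
  set v' := Function.update v (m + 1) (u (n + 1)) with hv'def
  have hv'M : v' (m + 1) = u (n + 1) := by rw [hv'def]; simp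
  have hv'ne : ∀ k, k ≤ m → v' k = v k := by
    intro k hk; rw [hv'def]; exact Function.update_of_ne (by omega) _ _
  have hvan : ∀ τ : Equiv.Perm (Fin (n + 1)), τ (Fin.last n) ≠ Fin.last n →
      ((∏ j : Fin (n+1), ∏ k : Fin (n+1),
        if (j : ℕ) < (k : ℕ) then
          brak q lam 1 / brak q lam (u ((τ j : ℕ) + 1) - u ((τ k : ℕ) + 1))
        else 1) *
      (∏ j : Fin (n+1), ∏ k ∈ Finset.Icc (x ((j : ℕ) + 1) + 1) (m+1),
        brak q lam (u ((τ j : ℕ) + 1) - v' k) / brak q lam 1) *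
      (∏ j : Fin (n+1),
        brak q lam (-u ((τ j : ℕ) + 1) + v' (x ((j : ℕ) + 1)) + a12 +
            (x ((j : ℕ) + 1) : ℂ) + ((n+1 : ℕ) : ℂ) - 2) /
          brak q lam (a12 + (x ((j : ℕ) + 1) : ℂ) + ((n+1 : ℕ) : ℂ) - 2)) *
      (∏ j : Fin (n+1), ∏ k ∈ Finset.Icc 1 (x ((j : ℕ) + 1) - 1),
        brak q lam (1 + u ((τ j : ℕ) + 1) - v' k) / brak q lam 1)) = 0 := by
    intro τ hτ
    have hj0 : τ⁻¹ (Fin.last n) ≠ Fin.last n := by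
      intro h
      apply hτ
      conv_lhs => rw [← h]
      exact τ.apply_symm_apply _
    have hjlt : ((τ⁻¹ (Fin.last n)) : ℕ) < n := by
      by_contra hcon
      apply hj0
      apply Fin.ext
      have h1 := (τ⁻¹ (Fin.last n)).isLt
      rw [Fin.val_last]
      omega
    have h2 : (∏ j : Fin (n+1), ∏ k ∈ Finset.Icc (x ((j : ℕ) + 1) + 1) (m+1),
        brak q lam (u ((τ j : ℕ) + 1) - v' k) / brak q lam 1) = 0 := by
      apply Finset.prod_eq_zero (Finset.mem_univ (τ⁻¹ (Fin.last n)))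
      apply Finset.prod_eq_zero (i := m + 1)
      · rw [Finset.mem_Icc]
        have := hxle (((τ⁻¹ (Fin.last n)) : ℕ) + 1) (by omega) (by omega)
        omega
      · rw [show τ (τ⁻¹ (Fin.last n)) = Fin.last n from τ.apply_symm_apply _, Fin.val_last, hv'M, sub_self, brak_zero, zero_div]
    rw [h2, mul_zero, zero_mul, zero_mul]
  have hP1 : (∏ j : Fin (n+1), ∏ k : Fin (n+1),
        if (j : ℕ) < (k : ℕ) then
          brak q lam (1 + u ((k : ℕ) + 1) - u ((j : ℕ) + 1)) / brak q lam 1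
        else 1)
      = (∏ j : Fin n, ∏ k : Fin n,
        if (j : ℕ) < (k : ℕ) then
          brak q lam (1 + u ((k : ℕ) + 1) - u ((j : ℕ) + 1)) / brak q lam 1
        else 1) * (∏ j ∈ Finset.Icc 1 n, brak q lam (1 + u (n + 1) - u j) / brak q lam 1) := by
    rw [prod_ite_lt_succ n
      (fun j k => brak q lam (1 + u ((k : ℕ) + 1) - u ((j : ℕ) + 1)) / brak q lam 1)]
    rw [← prod_fin_eq_prod_Icc n (fun a => brak q lam (1 + u (n + 1) - u a) / brak q lam 1)]
    simp only [Fin.coe_castSucc, Fin.val_last]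
  have hPre : (∏ k ∈ Finset.Icc 1 (n + 1),
        ∏ j ∈ Finset.Icc (xM (m+1) (n+1) x k) (xM (m+1) (n+1) x (k + 1) - 2),
        brak q lam (a12 + (j : ℂ) + ((n+1 : ℕ) : ℂ)) /
          brak q lam (a12 + (j : ℂ) + ((n+1 : ℕ) : ℂ) - (k : ℂ)))
      = (∏ k ∈ Finset.Icc 1 n,
        ∏ j ∈ Finset.Icc (xM m n x k) (xM m n x (k + 1) - 2),
        brak q lam (a12 + 1 + (j : ℂ) + ((n : ℕ) : ℂ)) /
          brak q lam (a12 + 1 + (j : ℂ) + ((n : ℕ) : ℂ) - (k : ℂ))) := by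
    rw [Finset.prod_Icc_succ_top (show 1 ≤ n + 1 by omega)]
    have h1 : xM (m+1) (n+1) x (n + 1) = m + 1 := by
      unfold xM; rw [if_neg (by omega)]; exact hxN
    have h2 : xM (m+1) (n+1) x (n + 1 + 1) = m + 1 + 1 := by
      unfold xM; rw [if_pos rfl]
    have h3 : (∏ j ∈ Finset.Icc (xM (m+1) (n+1) x (n + 1)) (xM (m+1) (n+1) x (n + 1 + 1) - 2),
        brak q lam (a12 + (j : ℂ) + ((n+1 : ℕ) : ℂ)) /
          brak q lam (a12 + (j : ℂ) + ((n+1 : ℕ) : ℂ) - ((n + 1 : ℕ) : ℂ))) = 1 := by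
      rw [h1, h2, show m + 1 + 1 - 2 = m from by omega,
        Finset.Icc_eq_empty (show ¬ m + 1 ≤ m from by omega), Finset.prod_empty]
    rw [h3, mul_one]
    apply Finset.prod_congr rfl
    intro k hk
    rw [Finset.mem_Icc] at hk
    have e1 : xM (m+1) (n+1) x k = xM m n x k := by
      unfold xM; rw [if_neg (by omega), if_neg (by omega)]
    have e2 : xM (m+1) (n+1) x (k + 1) = xM m n x (k + 1) := by
      unfold xM
      by_cases h : k = n
      · subst h; rw [if_neg (by omega), if_pos rfl]; exact hxN
      · rw [if_neg (by omega), if_neg (by omega)]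
    rw [e1, e2]
    apply Finset.prod_congr rfl
    intro j _
    rw [show a12 + (j : ℂ) + ((n+1 : ℕ) : ℂ) = a12 + 1 + (j : ℂ) + ((n : ℕ) : ℂ) from by
      push_cast; ring]
  have hsum : (∑ σ : Equiv.Perm (Fin (n + 1)), (∏ j : Fin (n+1), ∏ k : Fin (n+1),
        if (j : ℕ) < (k : ℕ) then
          brak q lam 1 / brak q lam (u ((σ j : ℕ) + 1) - u ((σ k : ℕ) + 1))
        else 1) *
      (∏ j : Fin (n+1), ∏ k ∈ Finset.Icc (x ((j : ℕ) + 1) + 1) (m+1),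
        brak q lam (u ((σ j : ℕ) + 1) - v' k) / brak q lam 1) *
      (∏ j : Fin (n+1),
        brak q lam (-u ((σ j : ℕ) + 1) + v' (x ((j : ℕ) + 1)) + a12 +
            (x ((j : ℕ) + 1) : ℂ) + ((n+1 : ℕ) : ℂ) - 2) /
          brak q lam (a12 + (x ((j : ℕ) + 1) : ℂ) + ((n+1 : ℕ) : ℂ) - 2)) *
      (∏ j : Fin (n+1), ∏ k ∈ Finset.Icc 1 (x ((j : ℕ) + 1) - 1),
        brak q lam (1 + u ((σ j : ℕ) + 1) - v' k) / brak q lam 1))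
      = (∏ k ∈ Finset.Icc 1 m, brak q lam (1 + u (n + 1) - v k) / brak q lam 1) * ∑ σ : Equiv.Perm (Fin n), (∏ j : Fin n, ∏ k : Fin n,
        if (j : ℕ) < (k : ℕ) then
          brak q lam 1 / brak q lam (u ((σ j : ℕ) + 1) - u ((σ k : ℕ) + 1))
        else 1) *
      (∏ j : Fin n, ∏ k ∈ Finset.Icc (x ((j : ℕ) + 1) + 1) m,
        brak q lam (u ((σ j : ℕ) + 1) - v k) / brak q lam 1) *
      (∏ j : Fin n,
        brak q lam (-u ((σ j : ℕ) + 1) + v (x ((j : ℕ) + 1)) + (a12 + 1) +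
            (x ((j : ℕ) + 1) : ℂ) + ((n : ℕ) : ℂ) - 2) /
          brak q lam ((a12 + 1) + (x ((j : ℕ) + 1) : ℂ) + ((n : ℕ) : ℂ) - 2)) *
      (∏ j : Fin n, ∏ k ∈ Finset.Icc 1 (x ((j : ℕ) + 1) - 1),
        brak q lam (1 + u ((σ j : ℕ) + 1) - v k) / brak q lam 1) := by
    rw [sum_perm_last _ hvan, Finset.mul_sum]
    apply Finset.sum_congr rfl
    intro σ _
    have hA : (∏ j : Fin (n+1), ∏ k : Fin (n+1),
        if (j : ℕ) < (k : ℕ) then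
          brak q lam 1 / brak q lam (u ((extLast σ j : ℕ) + 1) - u ((extLast σ k : ℕ) + 1))
        else 1) = (∏ j : Fin n, ∏ k : Fin n,
        if (j : ℕ) < (k : ℕ) then
          brak q lam 1 / brak q lam (u ((σ j : ℕ) + 1) - u ((σ k : ℕ) + 1))
        else 1) * (∏ j : Fin n, brak q lam 1 / brak q lam (u ((σ j : ℕ) + 1) - u (n + 1))) := by
      rw [prod_ite_lt_succ n
        (fun j k => brak q lam 1 /
          brak q lam (u ((extLast σ j : ℕ) + 1) - u ((extLast σ k : ℕ) + 1)))]
      simp only [extLast_castSucc, extLast_last, Fin.coe_castSucc, Fin.val_last]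
    have hB : (∏ j : Fin (n+1), ∏ k ∈ Finset.Icc (x ((j : ℕ) + 1) + 1) (m+1),
        brak q lam (u ((extLast σ j : ℕ) + 1) - v' k) / brak q lam 1) = (∏ j : Fin n, ∏ k ∈ Finset.Icc (x ((j : ℕ) + 1) + 1) m,
        brak q lam (u ((σ j : ℕ) + 1) - v k) / brak q lam 1) * (∏ j : Fin n, brak q lam (u ((σ j : ℕ) + 1) - u (n + 1)) / brak q lam 1) := by
      rw [Fin.prod_univ_castSucc]
      simp only [extLast_castSucc, extLast_last, Fin.coe_castSucc, Fin.val_last, hxN]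
      rw [Finset.Icc_eq_empty (show ¬ m + 1 + 1 ≤ m + 1 from by omega), Finset.prod_empty,
        mul_one, ← Finset.prod_mul_distrib]
      apply Finset.prod_congr rfl
      intro j _
      have hxj : x ((j : ℕ) + 1) ≤ m := hxle _ (by omega) (by have := j.isLt; omega)
      rw [Finset.prod_Icc_succ_top (by omega), hv'M]
      congr 1
      apply Finset.prod_congr rfl
      intro k hk
      rw [Finset.mem_Icc] at hk
      rw [hv'ne k (by omega)]
    have hC : (∏ j : Fin (n+1),
        brak q lam (-u ((extLast σ j : ℕ) + 1) + v' (x ((j : ℕ) + 1)) + a12 +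
            (x ((j : ℕ) + 1) : ℂ) + ((n+1 : ℕ) : ℂ) - 2) /
          brak q lam (a12 + (x ((j : ℕ) + 1) : ℂ) + ((n+1 : ℕ) : ℂ) - 2)) = (∏ j : Fin n,
        brak q lam (-u ((σ j : ℕ) + 1) + v (x ((j : ℕ) + 1)) + (a12 + 1) +
            (x ((j : ℕ) + 1) : ℂ) + ((n : ℕ) : ℂ) - 2) /
          brak q lam ((a12 + 1) + (x ((j : ℕ) + 1) : ℂ) + ((n : ℕ) : ℂ) - 2)) := by
      rw [Fin.prod_univ_castSucc]
      simp only [extLast_castSucc, extLast_last, Fin.coe_castSucc, Fin.val_last, hxN]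
      rw [hv'M]
      rw [show -u (n + 1) + u (n + 1) + a12 + ((m+1 : ℕ) : ℂ) + ((n+1 : ℕ) : ℂ) - 2
          = a12 + ((m + n : ℤ) : ℂ) from by push_cast; ring]
      rw [show a12 + ((m+1 : ℕ) : ℂ) + ((n+1 : ℕ) : ℂ) - 2
          = a12 + ((m + n : ℤ) : ℂ) from by push_cast; ring]
      rw [div_self (hbrA _), mul_one]
      apply Finset.prod_congr rfl
      intro j _
      have hxj : x ((j : ℕ) + 1) ≤ m := hxle _ (by omega) (by have := j.isLt; omega)
      rw [hv'ne _ (by omega)]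
      rw [show -u ((σ j : ℕ) + 1) + v (x ((j : ℕ) + 1)) + a12 +
            (x ((j : ℕ) + 1) : ℂ) + ((n+1 : ℕ) : ℂ) - 2
          = -u ((σ j : ℕ) + 1) + v (x ((j : ℕ) + 1)) + (a12 + 1) +
            (x ((j : ℕ) + 1) : ℂ) + ((n : ℕ) : ℂ) - 2 from by push_cast; ring]
      rw [show a12 + (x ((j : ℕ) + 1) : ℂ) + ((n+1 : ℕ) : ℂ) - 2
          = (a12 + 1) + (x ((j : ℕ) + 1) : ℂ) + ((n : ℕ) : ℂ) - 2 from by push_cast; ring]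
    have hD : (∏ j : Fin (n+1), ∏ k ∈ Finset.Icc 1 (x ((j : ℕ) + 1) - 1),
        brak q lam (1 + u ((extLast σ j : ℕ) + 1) - v' k) / brak q lam 1) = (∏ j : Fin n, ∏ k ∈ Finset.Icc 1 (x ((j : ℕ) + 1) - 1),
        brak q lam (1 + u ((σ j : ℕ) + 1) - v k) / brak q lam 1) * (∏ k ∈ Finset.Icc 1 m, brak q lam (1 + u (n + 1) - v k) / brak q lam 1) := by
      rw [Fin.prod_univ_castSucc]
      simp only [extLast_castSucc, extLast_last, Fin.coe_castSucc, Fin.val_last, hxN,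
        Nat.add_sub_cancel]
      congr 1
      · apply Finset.prod_congr rfl
        intro j _
        have hxj : x ((j : ℕ) + 1) ≤ m := hxle _ (by omega) (by have := j.isLt; omega)
        apply Finset.prod_congr rfl
        intro k hk
        rw [Finset.mem_Icc] at hk
        rw [hv'ne k (by omega)]
      · apply Finset.prod_congr rfl
        intro k hk
        rw [Finset.mem_Icc] at hk
        rw [hv'ne k (by omega)]
    have hExtra : (∏ j : Fin n, brak q lam 1 / brak q lam (u ((σ j : ℕ) + 1) - u (n + 1))) * (∏ j : Fin n, brak q lam (u ((σ j : ℕ) + 1) - u (n + 1)) / brak q lam 1) = 1 := by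
      rw [← Finset.prod_mul_distrib]
      apply Finset.prod_eq_one
      intro j _
      have hne : brak q lam (u ((σ j : ℕ) + 1) - u (n + 1)) ≠ 0 :=
        hu _ _ (by omega) (by have := (σ j).isLt; omega) (by omega) (le_refl _)
          (by have := (σ j).isLt; omega)
      rw [div_mul_div_comm, mul_comm (brak q lam 1), div_self (mul_ne_zero hne hbr1)]
    rw [hA, hB, hC, hD]
    exact key_alg _ _ _ _ _ _ _ hExtra
  rw [hP1, hPre, hsum]
  ring


end
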